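/- Let M be an infinite, bounded, uniformly discrete metric space. Then there exist a > 0 and sequences (u_i)_{i∈ℕ} and (v_i)_{i∈ℕ} in M, with the points u_1, v_1, u_2, v_2, … pairwise distinct, such that a·(i−1)/i ≤ d(u_i, v_i) ≤ a·(i+1)/i for all i ∈ ℕ; min{d(u_i, p), d(v_i, p)} ≥ a·(i−1)/i for all i ∈ ℕ and all p ∈ {u_j, v_j : j > i}; and min{d(u_i, q), d(v_i, q)} ≥ a·(i−1)/(2i) for all i ∈ ℕ and all q ∈ M \ {u_i, v_i}. -/

import Mathlib

open Metric Set Filter NNReal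

noncomputable section

/-- The topological dual of a normed space, with its OLD Mathlib definition (topology of `E`
taken from its norm). -/
abbrev NormedSpace.Dual (𝕜 : Type*) [NontriviallyNormedField 𝕜] (E : Type*)
    [SeminormedAddCommGroup E] [NormedSpace 𝕜 E] : Type _ :=
  E →L[𝕜] 𝕜

namespace DeltaPaper

/-! ### Generic Banach space notions -/

variable {X : Type*} [NormedAddCommGroup X] [NormedSpace ℝ X]

/-- `x` is a Daugavet-point: every slice of the unit ball contains, for every `ε > 0`,
an element at distance at least `2 - ε` from `x`. -/
def IsDaugavetPoint (x : X) : Prop :=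
  ∀ (φ : NormedSpace.Dual ℝ X) (α : ℝ), ‖φ‖ = 1 → 0 < α → ∀ ε > 0,
    ∃ y : X, ‖y‖ ≤ 1 ∧ 1 - α < φ y ∧ 2 - ε ≤ ‖x - y‖

/-- `x` is a Δ-point: every slice of the unit ball containing `x` contains, for every
`ε > 0`, an element at distance at least `2 - ε` from `x`. -/
def IsDeltaPoint (x : X) : Prop :=
  ∀ (φ : NormedSpace.Dual ℝ X) (α : ℝ), ‖φ‖ = 1 → 0 < α → 1 - α < φ x → ∀ ε > 0,
    ∃ y : X, ‖y‖ ≤ 1 ∧ 1 - α < φ y ∧ 2 - ε ≤ ‖x - y‖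

/-- `x*` is a w*-Daugavet-point of the dual of `X`. -/
def IsWeakStarDaugavetPoint (f : NormedSpace.Dual ℝ X) : Prop :=
  ∀ (x : X) (α : ℝ), ‖x‖ = 1 → 0 < α → ∀ ε > 0,
    ∃ g : NormedSpace.Dual ℝ X, ‖g‖ ≤ 1 ∧ 1 - α < g x ∧ 2 - ε ≤ ‖f - g‖

/-- `x*` is a w*-Δ-point of the dual of `X`. -/
def IsWeakStarDeltaPoint (f : NormedSpace.Dual ℝ X) : Prop :=
  ∀ (x : X) (α : ℝ), ‖x‖ = 1 → 0 < α → 1 - α < f x → ∀ ε > 0,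
    ∃ g : NormedSpace.Dual ℝ X, ‖g‖ ≤ 1 ∧ 1 - α < g x ∧ 2 - ε ≤ ‖f - g‖

/-- `x` is a denting point of the unit ball: it lies in slices of the unit ball of
arbitrarily small diameter. -/
def IsDentingPoint (x : X) : Prop :=
  ‖x‖ ≤ 1 ∧ ∀ ε > 0, ∃ (φ : NormedSpace.Dual ℝ X) (α : ℝ), ‖φ‖ = 1 ∧ 0 < α ∧
    1 - α < φ x ∧ Metric.diam {y : X | ‖y‖ ≤ 1 ∧ 1 - α < φ y} < ε

/-- The Kuratowski measure of non-compactness of a set: the infimum of all `ε > 0`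
such that the set can be covered by finitely many sets of diameter less than `ε`. -/
def kuratowski {Y : Type*} [PseudoMetricSpace Y] (A : Set Y) : ℝ :=
  sInf {ε : ℝ | 0 < ε ∧ ∃ 𝒞 : Finset (Set Y), (A ⊆ ⋃ B ∈ 𝒞, B) ∧ ∀ B ∈ 𝒞, Metric.diam B < ε}

/-! ### The space of Lipschitz functions vanishing at a base point -/

variable {M : Type*} [PseudoMetricSpace M]

/-- The least Lipschitz constant of a function. -/
def lipConst (f : M → ℝ) : ℝ≥0 := sInf {K | LipschitzWith K f}

theorem lipschitzWith_lipConst {f : M → ℝ} (hf : ∃ K, LipschitzWith K f) :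
    LipschitzWith (lipConst f) f := by
  obtain ⟨K₀, hK₀⟩ := hf
  rw [lipschitzWith_iff_dist_le_mul]
  intro x y
  rcases le_or_gt (dist x y) 0 with h | h
  · have h0 : dist x y = 0 := le_antisymm h dist_nonneg
    have := hK₀.dist_le_mul x y
    rw [h0, mul_zero] at this ⊢
    exact this
  · rw [← div_le_iff₀ h]
    have hnn : 0 ≤ dist (f x) (f y) / dist x y := by positivity
    rw [← Real.coe_toNNReal _ hnn, NNReal.coe_le_coe]
    refine le_csInf ⟨K₀, hK₀⟩ ?_
    intro K hK
    rw [← NNReal.coe_le_coe, Real.coe_toNNReal _ hnn, div_le_iff₀ h]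
    exact hK.dist_le_mul x y

theorem lipConst_le {f : M → ℝ} {K : ℝ≥0} (hK : LipschitzWith K f) : lipConst f ≤ K :=
  csInf_le (OrderBot.bddBelow _) hK

theorem lipschitzWith_smul {f : M → ℝ} {K : ℝ≥0} (hK : LipschitzWith K f) (c : ℝ) :
    LipschitzWith (‖c‖₊ * K) (c • f) := by
  rw [lipschitzWith_iff_dist_le_mul] at *
  intro x y
  have : dist ((c • f) x) ((c • f) y) = ‖c‖ * dist (f x) (f y) := by
    simp only [Pi.smul_apply, smul_eq_mul, Real.dist_eq, ← mul_sub, abs_mul, Real.norm_eq_abs]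
  rw [this, NNReal.coe_mul, coe_nnnorm, mul_assoc]
  exact mul_le_mul_of_nonneg_left (hK x y) (norm_nonneg c)

variable (M) in
/-- The submodule of `M → ℝ` consisting of Lipschitz functions vanishing at the
base point `z`. -/
def Lip0 (z : M) : Submodule ℝ (M → ℝ) where
  carrier := {f | (∃ K, LipschitzWith K f) ∧ f z = 0}
  add_mem' := by
    rintro f g ⟨⟨K, hK⟩, hf0⟩ ⟨⟨L, hL⟩, hg0⟩
    exact ⟨⟨K + L, hK.add hL⟩, by simp [hf0, hg0]⟩
  zero_mem' := ⟨⟨0, LipschitzWith.const' 0⟩, rfl⟩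
  smul_mem' := by
    rintro c f ⟨⟨K, hK⟩, hf0⟩
    exact ⟨⟨‖c‖₊ * K, lipschitzWith_smul hK c⟩, by simp [hf0]⟩

variable {z : M}

instance : NormedAddCommGroup ↥(Lip0 M z) :=
  AddGroupNorm.toNormedAddCommGroup
    { toFun := fun f => ((lipConst (f : M → ℝ) : ℝ≥0) : ℝ)
      map_zero' := by
        have h0 : lipConst (0 : M → ℝ) = 0 :=
          le_antisymm (lipConst_le (by simpa using LipschitzWith.const' (0 : ℝ))) bot_le
        show ((lipConst ((0 : ↥(Lip0 M z)) : M → ℝ) : ℝ≥0) : ℝ) = 0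
        rw [show ((0 : ↥(Lip0 M z)) : M → ℝ) = 0 from rfl, h0, NNReal.coe_zero]
      add_le' := by
        intro f g
        have hf := lipschitzWith_lipConst f.2.1
        have hg := lipschitzWith_lipConst g.2.1
        have : lipConst ((f + g : ↥(Lip0 M z)) : M → ℝ) ≤
            lipConst (f : M → ℝ) + lipConst (g : M → ℝ) := by
          refine lipConst_le ?_
          have := hf.add hg
          exact this
        exact_mod_cast this
      neg' := by
        intro f
        show ((lipConst ((-f : ↥(Lip0 M z)) : M → ℝ) : ℝ≥0) : ℝ) = _
        rw [show ((-f : ↥(Lip0 M z)) : M → ℝ) = -(f : M → ℝ) from rfl]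
        unfold lipConst
        congr 2
        ext K
        exact ⟨fun hK => by simpa using hK.neg, fun hK => hK.neg⟩
      eq_zero_of_map_eq_zero' := by
        intro f hf
        replace hf : ((lipConst (f : M → ℝ) : ℝ≥0) : ℝ) = 0 := hf
        have h0 : lipConst (f : M → ℝ) = 0 := by exact_mod_cast hf
        have hl : LipschitzWith 0 (f : M → ℝ) := h0 ▸ lipschitzWith_lipConst f.2.1
        ext x
        have := hl.dist_le_mul x z
        simp only [NNReal.coe_zero, zero_mul] at this
        have hxz : (f : M → ℝ) x = (f : M → ℝ) z :=
          dist_le_zero.mp this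
        simpa [f.2.2] using hxz }

theorem Lip0.norm_def (f : ↥(Lip0 M z)) : ‖f‖ = ((lipConst (f : M → ℝ) : ℝ≥0) : ℝ) := rfl

theorem Lip0.lipschitzWith (f : ↥(Lip0 M z)) : LipschitzWith (lipConst (f : M → ℝ)) (f : M → ℝ) :=
  lipschitzWith_lipConst f.2.1

instance : NormedSpace ℝ ↥(Lip0 M z) where
  norm_smul_le c f := by
    have : lipConst ((c • f : ↥(Lip0 M z)) : M → ℝ) ≤ ‖c‖₊ * lipConst (f : M → ℝ) :=
      lipConst_le (lipschitzWith_smul (Lip0.lipschitzWith f) c)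
    calc ‖c • f‖ = ((lipConst ((c • f : ↥(Lip0 M z)) : M → ℝ) : ℝ≥0) : ℝ) := rfl
      _ ≤ ((‖c‖₊ * lipConst (f : M → ℝ) : ℝ≥0) : ℝ) := by exact_mod_cast this
      _ = ‖c‖ * ‖f‖ := by push_cast [Lip0.norm_def]; rfl

variable (M z) in
/-- The evaluation functional `δ_x ∈ Lip₀(M)*`. -/
def evalδ (x : M) : NormedSpace.Dual ℝ ↥(Lip0 M z) :=
  LinearMap.mkContinuous
    ({ toFun := fun f => (f : M → ℝ) x
       map_add' := fun f g => rfl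
       map_smul' := fun c f => rfl } : ↥(Lip0 M z) →ₗ[ℝ] ℝ)
    (dist x z)
    (by
      intro f
      have := (Lip0.lipschitzWith f).dist_le_mul x z
      simp only [f.2.2, Real.dist_eq, sub_zero] at this
      calc ‖(f : M → ℝ) x‖ = |(f : M → ℝ) x - 0| := by simp
        _ ≤ (lipConst (f : M → ℝ) : ℝ) * dist x z := by
            simpa [f.2.2, Real.dist_eq] using (Lip0.lipschitzWith f).dist_le_mul x z
        _ = dist x z * ‖f‖ := by rw [Lip0.norm_def, mul_comm])

variable (M z) in
/-- The Lipschitz-free space over `M`: the closed linear span of the evaluation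
functionals inside `Lip₀(M)*`. -/
def FreeSpace : Submodule ℝ (NormedSpace.Dual ℝ ↥(Lip0 M z)) :=
  (Submodule.span ℝ (Set.range (evalδ M z))).topologicalClosure

variable (M z) in
/-- The molecule `m_{x y} = (δ_x - δ_y)/d(x,y)` as an element of `Lip₀(M)*`. -/
def molecule (x y : M) : NormedSpace.Dual ℝ ↥(Lip0 M z) :=
  (dist x y)⁻¹ • (evalδ M z x - evalδ M z y)

theorem molecule_mem_freeSpace (x y : M) : molecule M z x y ∈ FreeSpace M z :=
  Submodule.le_topologicalClosure _
    (Submodule.smul_mem _ _ (Submodule.sub_mem _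
      (Submodule.subset_span ⟨x, rfl⟩) (Submodule.subset_span ⟨y, rfl⟩)))

variable (M z) in
/-- The molecule `m_{x y}` as an element of the free space `F(M)`. -/
def mol (x y : M) : ↥(FreeSpace M z) := ⟨molecule M z x y, molecule_mem_freeSpace x y⟩

variable (M) in
/-- A metric space is uniformly discrete if distances between distinct points are
bounded below by a positive constant. -/
def UniformlyDiscrete : Prop := ∃ θ > (0:ℝ), ∀ x y : M, x ≠ y → θ ≤ dist x y

/-- A norm-one Lipschitz function is local if its Lipschitz constant is approximated
on pairs of arbitrarily close points. -/
def IsLocal (f : ↥(Lip0 M z)) : Prop :=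
  ∀ ε > 0, ∃ u v : M, u ≠ v ∧
    ‖f‖ - ε < ((f : M → ℝ) u - (f : M → ℝ) v) / dist u v ∧ dist u v < ε

/-- `f ∈ S_{Lip₀(M)}` is a w*-Daugavet-point: for every w*-slice `S(μ, α)` of
`B_{Lip₀(M)}` (`μ` a norm-one element of `F(M)`) and every `ε > 0` there is `g` in the
slice with `‖f - g‖ ≥ 2 - ε`. -/
def IsLipWeakStarDaugavetPoint (f : ↥(Lip0 M z)) : Prop :=
  ∀ μ : NormedSpace.Dual ℝ ↥(Lip0 M z), μ ∈ FreeSpace M z → ‖μ‖ = 1 → ∀ α > (0:ℝ), ∀ ε > (0:ℝ),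
    ∃ g : ↥(Lip0 M z), ‖g‖ ≤ 1 ∧ 1 - α < μ g ∧ 2 - ε ≤ ‖f - g‖

/-- `f ∈ S_{Lip₀(M)}` is a w*-Δ-point: the same as above, but only for w*-slices
containing `f`. -/
def IsLipWeakStarDeltaPoint (f : ↥(Lip0 M z)) : Prop :=
  ∀ μ : NormedSpace.Dual ℝ ↥(Lip0 M z), μ ∈ FreeSpace M z → ‖μ‖ = 1 → ∀ α > (0:ℝ),
    1 - α < μ f → ∀ ε > (0:ℝ),
    ∃ g : ↥(Lip0 M z), ‖g‖ ≤ 1 ∧ 1 - α < μ g ∧ 2 - ε ≤ ‖f - g‖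

end DeltaPaper

open DeltaPaper

set_option linter.unusedSectionVars false

namespace S18

variable {M : Type*} [MetricSpace M]

/-- cluster distances: realized by pairs avoiding any finite set. -/
def clus (M : Type*) [MetricSpace M] : Set ℝ :=
  {r | ∀ ε > (0:ℝ), ∀ F : Finset M, ∃ x y : M, x ∉ F ∧ y ∉ F ∧ x ≠ y ∧ |dist x y - r| < ε}

lemma finite_fiber_of_inj {f : ℕ → M} (hf : Function.Injective f) (z : M) :
    {n | f n = z}.Finite := by
  have h : {n | f n = z}.Subsingleton := fun m hm n hn => hf (hm.trans hn.symm)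
  exact h.finite

lemma clus_of_pairs {b : ℝ} {x y : ℕ → M} (hne : ∀ n, x n ≠ y n)
    (hx : ∀ z, {n | x n = z}.Finite) (hy : ∀ z, {n | y n = z}.Finite)
    (hb : ∀ n, dist (x n) (y n) ≤ b) : ∃ r ∈ clus M, r ≤ b := by
  have hmem : ∀ n, dist (x n) (y n) ∈ Set.Icc (0:ℝ) b := fun n => ⟨dist_nonneg, hb n⟩
  obtain ⟨r, hr, φ, hφ, hlim⟩ := isCompact_Icc.tendsto_subseq hmem
  refine ⟨r, ?_, hr.2⟩
  intro ε hε F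
  have hbad : {n | x n ∈ F ∨ y n ∈ F}.Finite := by
    have h1 : {n | x n ∈ F ∨ y n ∈ F} ⊆
        (⋃ z ∈ (F : Set M), {n | x n = z}) ∪ ⋃ z ∈ (F : Set M), {n | y n = z} := by
      rintro n (h | h)
      · exact Or.inl (Set.mem_biUnion h rfl)
      · exact Or.inr (Set.mem_biUnion h rfl)
    exact ((F.finite_toSet.biUnion fun z _ => hx z).union
      (F.finite_toSet.biUnion fun z _ => hy z)).subset h1
  obtain ⟨N, hN⟩ := hbad.bddAbove
  obtain ⟨K, hK⟩ := Metric.tendsto_atTop.mp hlim ε hε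
  set k := max K (N + 1) with hk
  have hφk : N < φ k :=
    lt_of_lt_of_le (Nat.lt_of_lt_of_le (Nat.lt_succ_self N) (le_max_right K (N+1))) hφ.le_apply
  have hout : φ k ∉ {n | x n ∈ F ∨ y n ∈ F} := fun h => absurd (hN h) (not_le.mpr hφk)
  simp only [Set.mem_setOf_eq, not_or] at hout
  refine ⟨x (φ k), y (φ k), hout.1, hout.2, hne _, ?_⟩
  have h2 := hK k (le_max_left _ _)
  rwa [Function.comp_apply, Real.dist_eq] at h2

lemma clus_nonempty [Infinite M] {D : ℝ} (hD : ∀ x y : M, dist x y ≤ D) :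
    (clus M).Nonempty := by
  have e := Infinite.natEmbedding M
  have hinj : ∀ g : ℕ → ℕ, Function.Injective g → Function.Injective (fun n => e (g n)) :=
    fun g hg => e.injective.comp hg
  obtain ⟨r, hr, -⟩ := clus_of_pairs (b := D)
    (x := fun n => e (2*n)) (y := fun n => e (2*n+1))
    (fun n => e.injective.ne (by omega))
    (fun z => finite_fiber_of_inj (hinj _ (fun m n h => by omega)) z)
    (fun z => finite_fiber_of_inj (hinj _ (fun m n h => by omega)) z)
    (fun n => hD _ _)
  exact ⟨r, hr⟩

lemma clus_lb {θ : ℝ} (hsep : ∀ x y : M, x ≠ y → θ ≤ dist x y) :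
    ∀ r ∈ clus M, θ ≤ r := by
  intro r hr
  by_contra h
  push_neg at h
  obtain ⟨x, y, -, -, hxy, hd⟩ := hr (θ - r) (by linarith) ∅
  have h1 := hsep x y hxy
  have h2 : dist x y - r ≤ |dist x y - r| := le_abs_self _
  linarith

lemma sInf_clus_mem [Infinite M] {θ D : ℝ}
    (hsep : ∀ x y : M, x ≠ y → θ ≤ dist x y) (hD : ∀ x y : M, dist x y ≤ D) :
    sInf (clus M) ∈ clus M := by
  have hne := clus_nonempty hD
  have hbdd : BddBelow (clus M) := ⟨θ, clus_lb hsep⟩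
  intro ε hε F
  obtain ⟨r, hr, hrlt⟩ := Real.lt_sInf_add_pos hne (half_pos hε)
  obtain ⟨x, y, hx, hy, hxy, hd⟩ := hr (ε/2) (half_pos hε) F
  refine ⟨x, y, hx, hy, hxy, ?_⟩
  have h1 : sInf (clus M) ≤ r := csInf_le hbdd hr
  have h2 : |dist x y - sInf (clus M)| ≤ |dist x y - r| + |r - sInf (clus M)| :=
    abs_sub_le _ _ _
  have h3 : |r - sInf (clus M)| = r - sInf (clus M) := abs_of_nonneg (by linarith)
  rw [h3] at h2
  linarith

/-- Non-isolated points at scale `c < a/2` form a finite set. -/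
lemma W_finite {a c : ℝ} (ha : ∀ r ∈ clus M, a ≤ r) (h2c : 2 * c < a) :
    {x : M | ∃ q, q ≠ x ∧ dist x q < c}.Finite := by
  by_contra hinf
  replace hinf : Set.Infinite {x : M | ∃ q, q ≠ x ∧ dist x q < c} := hinf
  have g := hinf.natEmbedding
  have hgval : Function.Injective (fun n => ((g n : {x : M | ∃ q, q ≠ x ∧ dist x q < c}) : M)) :=
    Subtype.coe_injective.comp g.injective
  choose q hq1 hq2 using fun n => (g n).2
  have hc0 : 0 < c := lt_of_le_of_lt dist_nonneg (hq2 0)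
  by_cases hz : ∃ z, {n | q n = z}.Infinite
  · obtain ⟨z, hzI⟩ := hz
    have k := hzI.natEmbedding
    have hκ : Function.Injective (fun j => ((k j : {n | q n = z}) : ℕ)) :=
      Subtype.coe_injective.comp k.injective
    have key : ∀ j, dist ((g ((k j : ℕ)) : M)) z < c := by
      intro j
      have h1 := hq2 ((k j : ℕ))
      rwa [(k j).2] at h1
    have hXinj : Function.Injective (fun j : ℕ => ((g ((k (2*j) : ℕ)) : M))) := by
      intro m n h
      have := hκ (hgval h)
      omega
    have hYinj : Function.Injective (fun j : ℕ => ((g ((k (2*j+1) : ℕ)) : M))) := by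
      intro m n h
      have := hκ (hgval h)
      omega
    obtain ⟨r, hr, hrb⟩ := clus_of_pairs (b := 2*c)
      (x := fun j => ((g ((k (2*j) : ℕ)) : M))) (y := fun j => ((g ((k (2*j+1) : ℕ)) : M)))
      (fun j => fun h => by have := hκ (hgval h); omega)
      (fun z => finite_fiber_of_inj hXinj z) (fun z => finite_fiber_of_inj hYinj z)
      (fun j => by
        have h1 := key (2*j); have h2 := key (2*j+1)
        have := dist_triangle_right ((g ((k (2*j) : ℕ)) : M)) ((g ((k (2*j+1) : ℕ)) : M)) z
        linarith)
    have := ha r hr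
    linarith
  · push_neg at hz
    obtain ⟨r, hr, hrb⟩ := clus_of_pairs (b := c)
      (x := fun n => ((g n : {x : M | ∃ q, q ≠ x ∧ dist x q < c}) : M)) (y := q)
      (fun n => (hq1 n).symm)
      (fun z => finite_fiber_of_inj hgval z)
      (fun z => hz z)
      (fun n => (hq2 n).le)
    have := ha r hr
    linarith

/-- Hubs at scale `b < a` form a finite set. -/
lemma hub_finite {a b : ℝ} (ha : ∀ r ∈ clus M, a ≤ r) (hb : b < a) :
    {u : M | {y' | y' ≠ u ∧ dist u y' < b}.Infinite}.Finite := by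
  by_contra hinf
  replace hinf : Set.Infinite {u : M | {y' | y' ≠ u ∧ dist u y' < b}.Infinite} := hinf
  have g := hinf.natEmbedding
  obtain ⟨f, hfP, hfr⟩ := exists_seq_of_forall_finset_exists
    (fun p : ℕ × M => p.2 ≠ (g p.1 : M) ∧ dist (g p.1 : M) p.2 < b)
    (fun p p' => p.1 < p'.1 ∧ p'.2 ≠ p.2)
    (by
      classical
      intro s _
      set n' := s.sup Prod.fst + 1 with hn'
      have hg : {y' | y' ≠ (g n' : M) ∧ dist (g n' : M) y' < b}.Infinite := (g n').2
      have h2 : ({y' | y' ≠ (g n' : M) ∧ dist (g n' : M) y' < b} \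
          (s.image Prod.snd : Finset M)).Infinite :=
        hg.diff (s.image Prod.snd).finite_toSet
      obtain ⟨y, hy⟩ := h2.nonempty
      refine ⟨(n', y), ⟨hy.1.1, hy.1.2⟩, ?_⟩
      intro p hp
      refine ⟨Nat.lt_succ_of_le (Finset.le_sup hp), ?_⟩
      intro hEq
      exact hy.2 (Finset.mem_coe.mpr (Finset.mem_image.mpr ⟨p, hp, hEq.symm⟩)))
  have htag : StrictMono (fun k => (f k).1) := fun m n h => (hfr m n h).1
  have hycomp : Function.Injective (fun k => (f k).2) := by
    intro m n h
    rcases lt_trichotomy m n with h' | h' | h'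
    · exact absurd h.symm (hfr m n h').2
    · exact h'
    · exact absurd h (hfr n m h').2
  obtain ⟨r, hr, hrb⟩ := clus_of_pairs (b := b)
    (x := fun k => (g ((f k).1) : M)) (y := fun k => (f k).2)
    (fun k => fun h => (hfP k).1 h.symm)
    (fun z => finite_fiber_of_inj ((Subtype.coe_injective.comp g.injective).comp htag.injective) z)
    (fun z => finite_fiber_of_inj hycomp z)
    (fun k => (hfP k).2.le)
  have := ha r hr
  linarith


variable {M : Type*} [MetricSpace M]

lemma base_seq {a : ℝ} (ha0 : 0 < a) (haC : a ∈ clus M) :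
    ∃ x y : ℕ → M, (∀ m n, x m ≠ y n) ∧ Function.Injective x ∧ Function.Injective y ∧
      ∀ m, |dist (x m) (y m) - a| ≤ a / ((m : ℝ) + 1) := by
  obtain ⟨f, hfP, hfr⟩ := exists_seq_of_forall_finset_exists
    (fun p : ℕ × M × M => p.2.1 ≠ p.2.2 ∧ |dist p.2.1 p.2.2 - a| < a / ((p.1 : ℝ) + 1))
    (fun p p' => p.1 < p'.1 ∧ p'.2.1 ≠ p.2.1 ∧ p'.2.1 ≠ p.2.2 ∧ p'.2.2 ≠ p.2.1 ∧
      p'.2.2 ≠ p.2.2)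
    (by
      classical
      intro s _
      set n' := s.sup Prod.fst + 1 with hn'
      set F := s.image (fun p => p.2.1) ∪ s.image (fun p => p.2.2) with hF
      obtain ⟨x, y, hx, hy, hxy, hd⟩ := haC (a / ((n' : ℝ) + 1)) (by positivity) F
      refine ⟨(n', x, y), ⟨hxy, hd⟩, ?_⟩
      intro p hp
      refine ⟨Nat.lt_succ_of_le (Finset.le_sup hp), ?_, ?_, ?_, ?_⟩
      · intro h
        have h' : x = p.2.1 := h
        exact hx (by rw [h']; exact Finset.mem_union_left _ (Finset.mem_image.mpr ⟨p, hp, rfl⟩))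
      · intro h
        have h' : x = p.2.2 := h
        exact hx (by rw [h']; exact Finset.mem_union_right _ (Finset.mem_image.mpr ⟨p, hp, rfl⟩))
      · intro h
        have h' : y = p.2.1 := h
        exact hy (by rw [h']; exact Finset.mem_union_left _ (Finset.mem_image.mpr ⟨p, hp, rfl⟩))
      · intro h
        have h' : y = p.2.2 := h
        exact hy (by rw [h']; exact Finset.mem_union_right _ (Finset.mem_image.mpr ⟨p, hp, rfl⟩)))
  refine ⟨fun m => (f m).2.1, fun m => (f m).2.2, ?_, ?_, ?_, ?_⟩
  · intro m n
    rcases lt_trichotomy m n with h | h | h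
    · exact ((hfr m n h).2.2.2.1).symm
    · subst h; exact (hfP m).1
    · exact (hfr n m h).2.2.1
  · intro m n h
    by_contra hne
    rcases lt_or_gt_of_ne hne with h' | h'
    · exact (hfr m n h').2.1 h.symm
    · exact (hfr n m h').2.1 h
  · intro m n h
    by_contra hne
    rcases lt_or_gt_of_ne hne with h' | h'
    · exact (hfr m n h').2.2.2.2 h.symm
    · exact (hfr n m h').2.2.2.2 h
  · intro m
    have htag : StrictMono (fun k => (f k).1) := fun i j h => (hfr i j h).1
    have h1 := (hfP m).2
    have h2 : a / ((f m).1 + 1 : ℝ) ≤ a / ((m : ℝ) + 1) := by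
      have hm : (m : ℝ) ≤ ((f m).1 : ℝ) := by exact_mod_cast htag.le_apply
      gcongr
    exact (h1.le.trans h2)


end S18


/-- Lemma 5.6. If `M` is infinite, bounded and uniformly discrete, then
there are `a > 0` and sequences `(u_i)_{i ≥ 1}`, `(v_i)_{i ≥ 1}` of pairwise distinct points
such that `a(i-1)/i ≤ d(u_i,v_i) ≤ a(i+1)/i`, `min{d(u_i,p), d(v_i,p)} ≥ a(i-1)/i` for every
`p ∈ {u_j, v_j : j > i}`, and `min{d(u_i,q), d(v_i,q)} ≥ a(i-1)/(2i)` for every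
`q ∈ M \ {u_i, v_i}`. -/
theorem statement18 {M : Type*} [MetricSpace M] [Infinite M]
    (hb : Bornology.IsBounded (Set.univ : Set M)) (hud : UniformlyDiscrete M) :
    ∃ a > (0:ℝ), ∃ u v : ℕ → M,
      (∀ i j : ℕ, 1 ≤ i → 1 ≤ j → u i ≠ v j) ∧
      (∀ i j : ℕ, 1 ≤ i → 1 ≤ j → i ≠ j → u i ≠ u j ∧ v i ≠ v j) ∧
      (∀ i : ℕ, 1 ≤ i →
        a * ((i : ℝ) - 1) / i ≤ dist (u i) (v i) ∧
        dist (u i) (v i) ≤ a * ((i : ℝ) + 1) / i) ∧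
      (∀ i : ℕ, 1 ≤ i → ∀ j : ℕ, i < j →
        a * ((i : ℝ) - 1) / i ≤ min (dist (u i) (u j)) (dist (v i) (u j)) ∧
        a * ((i : ℝ) - 1) / i ≤ min (dist (u i) (v j)) (dist (v i) (v j))) ∧
      (∀ i : ℕ, 1 ≤ i → ∀ q : M, q ≠ u i → q ≠ v i →
        a * ((i : ℝ) - 1) / (2 * i) ≤ min (dist (u i) q) (dist (v i) q)) := by
  classical
  obtain ⟨θ, hθ, hsep⟩ := hud
  obtain ⟨D, hD⟩ := Metric.isBounded_iff.mp hb
  have hD' : ∀ x y : M, dist x y ≤ D := fun x y => hD (Set.mem_univ x) (Set.mem_univ y)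
  set a := sInf (S18.clus M) with haDef
  have haC : a ∈ S18.clus M := S18.sInf_clus_mem hsep hD'
  have haθ : θ ≤ a := le_csInf (S18.clus_nonempty hD') (S18.clus_lb hsep)
  have ha0 : 0 < a := lt_of_lt_of_le hθ haθ
  have halb : ∀ r ∈ S18.clus M, a ≤ r := fun r hr => csInf_le ⟨θ, S18.clus_lb hsep⟩ hr
  obtain ⟨X, Y, hXY, hXinj, hYinj, hXYd⟩ := S18.base_seq ha0 haC
  have hW : ∀ t : ℕ, 1 ≤ t →
      {x : M | ∃ q, q ≠ x ∧ dist x q < a * ((t:ℝ) - 1) / (2 * t)}.Finite := by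
    intro t ht
    refine S18.W_finite halb ?_
    have ht' : (1:ℝ) ≤ (t:ℝ) := by exact_mod_cast ht
    have ht0 : (0:ℝ) < (t:ℝ) := by linarith
    rw [show 2 * (a * ((t:ℝ) - 1) / (2 * t)) = a * (((t:ℝ) - 1) / t) by field_simp; try ring]
    calc a * (((t:ℝ) - 1) / t) < a * 1 := by
          apply mul_lt_mul_of_pos_left _ ha0
          rw [div_lt_one ht0]; linarith
      _ = a := mul_one a
  have hH : ∀ t : ℕ, 1 ≤ t →
      {u : M | {y' | y' ≠ u ∧ dist u y' < a - a / t}.Infinite}.Finite := by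
    intro t ht
    refine S18.hub_finite halb ?_
    have ht0 : (0:ℝ) < (t:ℝ) := by exact_mod_cast ht
    have : 0 < a / (t:ℝ) := div_pos ha0 ht0
    linarith
  have hpreX : ∀ S : Set M, S.Finite → {m : ℕ | X m ∈ S}.Finite :=
    fun S hS => hS.preimage hXinj.injOn
  have hpreY : ∀ S : Set M, S.Finite → {m : ℕ | Y m ∈ S}.Finite :=
    fun S hS => hS.preimage hYinj.injOn
  obtain ⟨G, hGP, hGr⟩ := exists_seq_of_forall_finset_exists
    (fun p : ℕ × ℕ => 1 ≤ p.1 ∧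
      (∀ q : M, q ≠ X p.2 → a * ((p.1:ℝ) - 1) / (2 * p.1) ≤ dist (X p.2) q) ∧
      (∀ q : M, q ≠ Y p.2 → a * ((p.1:ℝ) - 1) / (2 * p.1) ≤ dist (Y p.2) q) ∧
      {y' : M | y' ≠ X p.2 ∧ dist (X p.2) y' < a - a / p.1}.Finite ∧
      {y' : M | y' ≠ Y p.2 ∧ dist (Y p.2) y' < a - a / p.1}.Finite ∧
      |dist (X p.2) (Y p.2) - a| ≤ a / p.1)
    (fun p p' => p.1 < p'.1 ∧ p.2 < p'.2 ∧
      a - a / p.1 ≤ dist (X p.2) (X p'.2) ∧ a - a / p.1 ≤ dist (X p.2) (Y p'.2) ∧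
      a - a / p.1 ≤ dist (Y p.2) (X p'.2) ∧ a - a / p.1 ≤ dist (Y p.2) (Y p'.2))
    (by
      intro s hs
      set j := s.sup Prod.fst + 1 with hj
      have hj1 : 1 ≤ j := Nat.succ_le_succ (Nat.zero_le _)
      set Wc : Set M := {x : M | ∃ q, q ≠ x ∧ dist x q < a * ((j:ℝ) - 1) / (2 * j)} with hWc
      set Hb : Set M := {u : M | {y' | y' ≠ u ∧ dist u y' < a - a / j}.Infinite} with hHb
      set NXf : ℕ × ℕ → Set M := fun p => {y' | y' ≠ X p.2 ∧ dist (X p.2) y' < a - a / p.1}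
        with hNXf
      set NYf : ℕ × ℕ → Set M := fun p => {y' | y' ≠ Y p.2 ∧ dist (Y p.2) y' < a - a / p.1}
        with hNYf
      set BadA : Set ℕ := {m | X m ∈ Wc} ∪ {m | Y m ∈ Wc} ∪ {m | X m ∈ Hb} ∪ {m | Y m ∈ Hb}
        with hBadA
      set BadB : Set ℕ := ⋃ p ∈ (s : Set (ℕ × ℕ)),
        ({m | X m ∈ NXf p} ∪ {m | Y m ∈ NXf p} ∪ {m | X m ∈ NYf p} ∪ {m | Y m ∈ NYf p})
        with hBadB
      have hAfin : BadA.Finite :=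
        (((hpreX _ (hW j hj1)).union (hpreY _ (hW j hj1))).union
          (hpreX _ (hH j hj1))).union (hpreY _ (hH j hj1))
      have hBfin : BadB.Finite := by
        refine Set.Finite.biUnion s.finite_toSet ?_
        intro p hp
        have hp' := hs p hp
        exact (((hpreX _ hp'.2.2.2.1).union (hpreY _ hp'.2.2.2.1)).union
          (hpreX _ hp'.2.2.2.2.1)).union (hpreY _ hp'.2.2.2.2.1)
      obtain ⟨N1, hN1⟩ := (hAfin.union hBfin).bddAbove
      set m' := N1 + s.sup Prod.snd + j + 1 with hm'
      have hm'A : m' ∉ BadA := fun h => by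
        have := hN1 (Set.mem_union_left _ h); omega
      have hm'B : ∀ p ∈ s, m' ∉ ({m | X m ∈ NXf p} ∪ {m | Y m ∈ NXf p} ∪
          {m | X m ∈ NYf p} ∪ {m | Y m ∈ NYf p}) := fun p hp h => by
        have := hN1 (Set.mem_union_right _ (Set.mem_biUnion hp h)); omega
      have hXW : X m' ∉ Wc := fun h => hm'A (by left; left; left; exact h)
      have hYW : Y m' ∉ Wc := fun h => hm'A (by left; left; right; exact h)
      have hXH : X m' ∉ Hb := fun h => hm'A (by left; right; exact h)
      have hYH : Y m' ∉ Hb := fun h => hm'A (by right; exact h)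
      have hjm' : j ≤ m' := by omega
      refine ⟨(j, m'), ⟨hj1, ?_, ?_, ?_, ?_, ?_⟩, ?_⟩
      · intro q hq
        by_contra hlt
        exact hXW ⟨q, hq, by linarith [not_le.mp hlt]⟩
      · intro q hq
        by_contra hlt
        exact hYW ⟨q, hq, by linarith [not_le.mp hlt]⟩
      · exact Set.not_infinite.mp hXH
      · exact Set.not_infinite.mp hYH
      · have h1 := hXYd m'
        have h2 : a / ((m' : ℝ) + 1) ≤ a / (j : ℝ) := by
          apply div_le_div_of_nonneg_left ha0.le
          · exact_mod_cast hj1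
          · exact_mod_cast Nat.le_succ_of_le hjm'
        exact h1.trans h2
      · intro p hp
        have hp1 : p.1 < j := Nat.lt_succ_of_le (Finset.le_sup hp)
        have hp2 : p.2 < m' := by
          have := Finset.le_sup (f := Prod.snd) hp; omega
        have hB := hm'B p hp
        have hXX : X m' ∉ NXf p := fun h => hB (by left; left; left; exact h)
        have hYX : Y m' ∉ NXf p := fun h => hB (by left; left; right; exact h)
        have hXY' : X m' ∉ NYf p := fun h => hB (by left; right; exact h)
        have hYY : Y m' ∉ NYf p := fun h => hB (by right; exact h)
        refine ⟨hp1, hp2, ?_, ?_, ?_, ?_⟩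
        · by_contra hlt
          refine hXX ⟨?_, by linarith [not_le.mp hlt]⟩
          intro h
          exact absurd (hXinj h) (by omega)
        · by_contra hlt
          exact hYX ⟨(hXY p.2 m').symm, by linarith [not_le.mp hlt]⟩
        · by_contra hlt
          exact hXY' ⟨hXY m' p.2, by linarith [not_le.mp hlt]⟩
        · by_contra hlt
          exact hYY ⟨fun h => absurd (hYinj h) (by omega), by linarith [not_le.mp hlt]⟩)
  set T : ℕ → ℕ := fun i => (G i).1 with hT
  set m : ℕ → ℕ := fun i => (G i).2 with hm
  have hTmono : StrictMono T := fun i j h => (hGr i j h).1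
  have hmmono : StrictMono m := fun i j h => (hGr i j h).2.1
  have hTle : ∀ i, i ≤ T i := fun i => hTmono.le_apply
  have hT1 : ∀ i, 1 ≤ T i := fun i => (hGP i).1
  refine ⟨a, ha0, fun i => X (m i), fun i => Y (m i), ?_, ?_, ?_, ?_, ?_⟩
  · intro i j _ _
    exact hXY _ _
  · intro i j _ _ hij
    exact ⟨fun h => hij (hmmono.injective (hXinj h)),
      fun h => hij (hmmono.injective (hYinj h))⟩
  · intro i hi
    have hi' : (1:ℝ) ≤ (i:ℝ) := by exact_mod_cast hi
    have hi0 : (0:ℝ) < (i:ℝ) := by linarith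
    have hTi : (i:ℝ) ≤ (T i : ℝ) := by exact_mod_cast hTle i
    have habs := (hGP i).2.2.2.2.2
    have hle : a / (T i : ℝ) ≤ a / (i : ℝ) := by
      apply div_le_div_of_nonneg_left ha0.le hi0 hTi
    have h1 := abs_le.mp (habs.trans hle)
    constructor
    · rw [show a * ((i:ℝ) - 1) / i = a - a / i by field_simp; try ring]
      linarith [h1.1]
    · rw [show a * ((i:ℝ) + 1) / i = a + a / i by field_simp; try ring]
      linarith [h1.2]
  · intro i hi j hij
    have hr := hGr i j hij
    have hi' : (1:ℝ) ≤ (i:ℝ) := by exact_mod_cast hi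
    have hi0 : (0:ℝ) < (i:ℝ) := by linarith
    have hTi : (i:ℝ) ≤ (T i : ℝ) := by exact_mod_cast hTle i
    have key : a * ((i:ℝ) - 1) / i ≤ a - a / (T i : ℝ) := by
      have hle : a / (T i : ℝ) ≤ a / (i : ℝ) :=
        div_le_div_of_nonneg_left ha0.le hi0 hTi
      rw [show a * ((i:ℝ) - 1) / i = a - a / i by field_simp; try ring]
      linarith
    exact ⟨le_min (key.trans hr.2.2.1) (key.trans hr.2.2.2.2.1),
      le_min (key.trans hr.2.2.2.1) (key.trans hr.2.2.2.2.2)⟩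
  · intro i hi q hqu hqv
    have hi' : (1:ℝ) ≤ (i:ℝ) := by exact_mod_cast hi
    have hi0 : (0:ℝ) < (i:ℝ) := by linarith
    have hTi : (i:ℝ) ≤ (T i : ℝ) := by exact_mod_cast hTle i
    have hT0 : (0:ℝ) < (T i : ℝ) := by linarith
    have hmono : a * ((i:ℝ) - 1) / (2 * i) ≤ a * ((T i : ℝ) - 1) / (2 * T i) := by
      rw [show a * ((i:ℝ) - 1) / (2 * i) = a / 2 * (1 - 1 / i) by field_simp; try ring,
        show a * ((T i : ℝ) - 1) / (2 * T i) = a / 2 * (1 - 1 / (T i : ℝ)) by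
          field_simp; try ring]
      have h1 : 1 / (T i : ℝ) ≤ 1 / (i : ℝ) := one_div_le_one_div_of_le hi0 hTi
      have h2 : (0:ℝ) ≤ a / 2 := by linarith
      nlinarith
    exact le_min (hmono.trans ((hGP i).2.1 q hqu)) (hmono.trans ((hGP i).2.2.1 q hqv))
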